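/- Let C and D be symmetric monoidal categories, let F : C ⥤ D be a strong monoidal functor admitting a right adjoint G, let X be an object of D and let Y be a dualizable object of C. Then the canonical projection-formula morphism G(X) ⊗ Y → G(X ⊗ F(Y)) — the adjoint transpose of F(G(X) ⊗ Y) ≅ F(G(X)) ⊗ F(Y) → X ⊗ F(Y) (counit on the first factor) — is an isomorphism. -/

import Mathlib

open CategoryTheory MonoidalCategory Functor.Monoidal Functor.LaxMonoidal Functor.OplaxMonoidal

noncomputable section

variable {C D : Type*} [Category C] [Category D]
    [MonoidalCategory C] [MonoidalCategory D]
    (F : C ⥤ D) [F.Monoidal]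

lemma mid_assoc (X Y Z : C) :
    F.obj X ◁ δ F Y Z ≫ (α_ (F.obj X) (F.obj Y) (F.obj Z)).inv ≫ μ F X Y ▷ F.obj Z =
      μ F X (Y ⊗ Z) ≫ F.map (α_ X Y Z).inv ≫ δ F (X ⊗ Y) Z := by
  have h2 : F.obj X ◁ μ F Y Z ≫ μ F X (Y ⊗ Z) ≫ F.map (α_ X Y Z).inv ≫ δ F (X ⊗ Y) Z =
      (α_ _ _ _).inv ≫ μ F X Y ▷ F.obj Z := by
    rw [Functor.LaxMonoidal.associativity_inv_assoc]
    simp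
  calc F.obj X ◁ δ F Y Z ≫ (α_ _ _ _).inv ≫ μ F X Y ▷ F.obj Z
      = F.obj X ◁ δ F Y Z ≫ F.obj X ◁ μ F Y Z ≫ μ F X (Y ⊗ Z) ≫ F.map (α_ X Y Z).inv ≫
        δ F (X ⊗ Y) Z := by rw [h2]
    _ = _ := by rw [← MonoidalCategory.whiskerLeft_comp_assoc]; simp

lemma mid_assoc' (X Y Z : C) :
    δ F X Y ▷ F.obj Z ≫ (α_ (F.obj X) (F.obj Y) (F.obj Z)).hom ≫ F.obj X ◁ μ F Y Z =
      μ F (X ⊗ Y) Z ≫ F.map (α_ X Y Z).hom ≫ δ F X (Y ⊗ Z) := by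
  have h2 : μ F X Y ▷ F.obj Z ≫ μ F (X ⊗ Y) Z ≫ F.map (α_ X Y Z).hom ≫ δ F X (Y ⊗ Z) =
      (α_ _ _ _).hom ≫ F.obj X ◁ μ F Y Z := by
    rw [Functor.LaxMonoidal.associativity_assoc]
    simp
  calc δ F X Y ▷ F.obj Z ≫ (α_ _ _ _).hom ≫ F.obj X ◁ μ F Y Z
      = δ F X Y ▷ F.obj Z ≫ μ F X Y ▷ F.obj Z ≫ μ F (X ⊗ Y) Z ≫ F.map (α_ X Y Z).hom ≫
        δ F X (Y ⊗ Z) := by rw [h2]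
    _ = _ := by rw [← comp_whiskerRight_assoc]; simp

/-- A strong monoidal functor sends exact pairings to exact pairings. -/
def mapExactPairing (Y Z : C) [ExactPairing Y Z] :
    ExactPairing (F.obj Y) (F.obj Z) where
  coevaluation' := ε F ≫ F.map (η_ Y Z) ≫ δ F Y Z
  evaluation' := μ F Z Y ≫ F.map (ε_ Y Z) ≫ η F
  coevaluation_evaluation' := by
    simp only [MonoidalCategory.whiskerLeft_comp, comp_whiskerRight, Category.assoc]
    slice_lhs 3 5 => rw [mid_assoc]
    slice_lhs 2 3 => rw [μ_natural_right]
    slice_lhs 5 6 => rw [δ_natural_left]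
    slice_lhs 3 5 => rw [← F.map_comp, ← F.map_comp, ExactPairing.coevaluation_evaluation]
    rw [F.map_comp]
    slice_lhs 1 3 => rw [← Functor.LaxMonoidal.right_unitality]
    slice_lhs 2 4 => rw [← Functor.OplaxMonoidal.left_unitality]
  evaluation_coevaluation' := by
    simp only [MonoidalCategory.whiskerLeft_comp, comp_whiskerRight, Category.assoc]
    slice_lhs 3 5 => rw [mid_assoc']
    slice_lhs 2 3 => rw [μ_natural_left]
    slice_lhs 5 6 => rw [δ_natural_right]
    slice_lhs 3 5 => rw [← F.map_comp, ← F.map_comp, ExactPairing.evaluation_coevaluation]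
    rw [F.map_comp]
    slice_lhs 1 3 => rw [← Functor.LaxMonoidal.left_unitality]
    slice_lhs 2 4 => rw [← Functor.OplaxMonoidal.right_unitality]

end

section Main

open Functor.Monoidal

attribute [local instance] mapExactPairing

variable {C D : Type*} [Category C] [Category D]
    [MonoidalCategory C] [MonoidalCategory D]
    (F : C ⥤ D) [F.Monoidal]

@[simp] lemma mapExactPairing_evaluation (W Y : C) [ExactPairing W Y] :
    ε_ (F.obj W) (F.obj Y) = μ F Y W ≫ F.map (ε_ W Y) ≫ η F := rfl

@[simp] lemma mapExactPairing_coevaluation (W Y : C) [ExactPairing W Y] :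
    η_ (F.obj W) (F.obj Y) = ε F ≫ F.map (η_ W Y) ≫ δ F W Y := rfl

lemma t2nat {U V : D} [ExactPairing U V] {W' W'' : D} (X : D)
    (h : W' ⟶ W'') (f : W'' ⊗ U ⟶ X) :
    tensorRightHomEquiv W' U V X (h ▷ U ≫ f) = h ≫ tensorRightHomEquiv W'' U V X f := by
  have := tensorRightHomEquiv_symm_naturality (Y := U) (Y' := V) h
    (tensorRightHomEquiv W'' U V X f)
  rw [Equiv.symm_apply_apply] at this
  rw [← this, Equiv.apply_symm_apply]

lemma muRho (c : C) : μ F c (𝟙_ C) ≫ F.map (ρ_ c).hom =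
    F.obj c ◁ η F ≫ (ρ_ (F.obj c)).hom := by
  conv_rhs => rw [Functor.LaxMonoidal.right_unitality (F := F) c]
  rw [← MonoidalCategory.whiskerLeft_comp_assoc]
  simp

lemma center (W Y : C) [ExactPairing W Y] (c : C) (X : D) (k : F.obj c ⟶ X) :
    tensorRightHomEquiv (F.obj (c ⊗ Y)) (F.obj W) (F.obj Y) X
      (μ F (c ⊗ Y) W ≫
        F.map ((tensorRightHomEquiv (c ⊗ Y) W Y c).symm (𝟙 (c ⊗ Y))) ≫ k)
    = δ F c Y ≫ (k ⊗ₘ 𝟙 (F.obj Y)) := by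
  rw [Equiv.apply_eq_iff_eq_symm_apply]
  dsimp only [tensorRightHomEquiv, Equiv.coe_fn_mk, Equiv.coe_fn_symm_mk]
  -- clean up the C-side morphism
  rw [id_whiskerRight, Category.id_comp]
  have hm : μ F (c ⊗ Y) W ≫ F.map (α_ c Y W).hom =
      δ F c Y ▷ F.obj W ≫ (α_ _ _ _).hom ≫ F.obj c ◁ μ F Y W ≫ μ F c (Y ⊗ W) := by
    rw [← cancel_mono (δ F c (Y ⊗ W))]
    simp only [Category.assoc, Functor.Monoidal.μ_δ, Category.comp_id]
    exact (mid_assoc' F c Y W).symm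
  simp only [F.map_comp, mapExactPairing_evaluation]
  slice_lhs 1 2 => rw [hm]
  slice_lhs 4 5 => rw [← μ_natural_right]
  slice_lhs 5 6 => rw [muRho]
  simp only [tensorHom_id, comp_whiskerRight, Category.assoc,
    MonoidalCategory.whiskerLeft_comp]
  slice_rhs 2 3 => rw [associator_naturality_left]
  slice_rhs 3 4 => rw [← whisker_exchange]
  slice_rhs 4 5 => rw [← whisker_exchange]
  slice_rhs 5 6 => rw [← whisker_exchange]
  simp

end Main

section Thm

attribute [local instance] mapExactPairing

/-- **Projection formula for dualizable objects.**
Let `C`, `D` be symmetric monoidal categories, `F : C ⥤ D` a strong monoidal functor with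
right adjoint `G`, `X : D`, and `Y : C` dualizable. Then the canonical morphism
`G(X) ⊗ Y ⟶ G(X ⊗ F(Y))`, the adjoint transpose of
`F(G(X) ⊗ Y) ≅ F(G(X)) ⊗ F(Y) ⟶ X ⊗ F(Y)` (counit on the first factor), is an isomorphism. -/
theorem stmt0 {C D : Type*} [Category C] [Category D]
    [MonoidalCategory C] [MonoidalCategory D]
    [SymmetricCategory C] [SymmetricCategory D]
    (F : C ⥤ D) [F.Monoidal] (G : D ⥤ C) (adj : F ⊣ G)
    (X : D) (Y : C) [HasRightDual Y] :
    IsIso ((adj.homEquiv (G.obj X ⊗ Y) (X ⊗ F.obj Y))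
      ((Functor.Monoidal.μIso F (G.obj X) Y).inv ≫ (adj.counit.app X ⊗ₘ 𝟙 (F.obj Y)))) := by
  letI : ExactPairing Yᘁ Y := BraidedCategory.exactPairing_swap Y Yᘁ
  set φ : G.obj X ⊗ Y ⟶ G.obj (X ⊗ F.obj Y) :=
    (adj.homEquiv (G.obj X ⊗ Y) (X ⊗ F.obj Y))
      ((Functor.Monoidal.μIso F (G.obj X) Y).inv ≫ (adj.counit.app X ⊗ₘ 𝟙 (F.obj Y))) with hφ
  let e : ∀ A : C, (A ⟶ G.obj X ⊗ Y) ≃ (A ⟶ G.obj (X ⊗ F.obj Y)) := fun A =>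
    ((tensorRightHomEquiv A Yᘁ Y (G.obj X)).symm.trans
      (((adj.homEquiv (A ⊗ Yᘁ) X).symm).trans
        ((⟨fun f => μ F A Yᘁ ≫ f, fun f => δ F A Yᘁ ≫ f,
            fun f => by simp, fun f => by simp⟩ :
              (F.obj (A ⊗ Yᘁ) ⟶ X) ≃ (F.obj A ⊗ F.obj Yᘁ ⟶ X)).trans
          ((tensorRightHomEquiv (F.obj A) (F.obj Yᘁ) (F.obj Y) X).trans
            (adj.homEquiv A (X ⊗ F.obj Y))))))
  have key : ∀ {A : C} (g : A ⟶ G.obj X ⊗ Y), e A g = g ≫ φ := by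
    intro A g
    show (adj.homEquiv A (X ⊗ F.obj Y)) (tensorRightHomEquiv (F.obj A) (F.obj Yᘁ) (F.obj Y) X
      (μ F A Yᘁ ≫ ((adj.homEquiv (A ⊗ Yᘁ) X).symm
        ((tensorRightHomEquiv A Yᘁ Y (G.obj X)).symm g)))) = g ≫ φ
    rw [Adjunction.homEquiv_counit]
    have h1 : (tensorRightHomEquiv A Yᘁ Y (G.obj X)).symm g
        = g ▷ Yᘁ ≫ (tensorRightHomEquiv (G.obj X ⊗ Y) Yᘁ Y (G.obj X)).symm (𝟙 _) := by
      conv_lhs => rw [← Category.comp_id g]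
      rw [tensorRightHomEquiv_symm_naturality]
    rw [h1, F.map_comp]
    slice_lhs 1 2 => skip
    rw [show (μ F A Yᘁ ≫ F.map (g ▷ Yᘁ)) = F.map g ▷ F.obj Yᘁ ≫ μ F (G.obj X ⊗ Y) Yᘁ from
      (μ_natural_left F g Yᘁ).symm]
    rw [Category.assoc, Category.assoc, t2nat, center, Adjunction.homEquiv_naturality_left, hφ,
      Functor.Monoidal.μIso_inv]
  have hψφ : (e (G.obj (X ⊗ F.obj Y))).symm (𝟙 _) ≫ φ = 𝟙 _ := by
    rw [← key]; exact (e _).apply_symm_apply _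
  refine ⟨(e (G.obj (X ⊗ F.obj Y))).symm (𝟙 _), ?_, hψφ⟩
  apply (e (G.obj X ⊗ Y)).injective
  rw [key, key, Category.assoc, hψφ, Category.id_comp, Category.comp_id]

end Thm
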